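/- If A ⊆ ω^ω has an F_σ superset B such that no tree T ∈ Q₀ satisfies [T] ⊆ B, then Eve has a winning strategy in the game G₀(A). (Consequence of Borel determinacy together with the characterization of Adam's winning strategies.) -/

import Mathlib

/-- The finite initial segment of `x` of length `n`, as a list. -/
def res (x : ℕ → ℕ) (n : ℕ) : List ℕ := (List.range n).map x

/-- A (nonempty, initial-segment-closed) tree of finite sequences of naturals. -/
def IsTree (T : Set (List ℕ)) : Prop :=
  T.Nonempty ∧ ∀ t ∈ T, ∀ s, s <+: t → s ∈ T

/-- The set of infinite branches of a tree. -/
def branches (T : Set (List ℕ)) : Set (ℕ → ℕ) := {x | ∀ n, res x n ∈ T}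

/-- The set of (values of) immediate successors of `t` in `T`. -/
def succs (T : Set (List ℕ)) (t : List ℕ) : Set ℕ := {a | t ++ [a] ∈ T}

/-- The poset `Q₀`: every node extends to nodes of arbitrarily large norm. -/
def Q0 (norm : List ℕ → Set ℕ → ℝ) (T : Set (List ℕ)) : Prop :=
  IsTree T ∧ ∀ n : ℕ, ∀ s ∈ T, ∃ t ∈ T, s <+: t ∧ (n : ℝ) < norm t (succs T t)

/-- `t` is an initial segment of the infinite sequence `x`. -/
def prefixOf (t : List ℕ) (x : ℕ → ℕ) : Prop := t = res x t.length

/-- Adam's move: a candidate one-step extension value together with the further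
(arbitrary) extension to be used in case Eve accepts the candidate. -/
abbrev AMove : Type := ℕ × List ℕ

/-- State of the game `G₀`: the current node `tₙ`, the current stage `n`, and the set of
candidate one-step extension values Adam has offered so far at the current stage. -/
structure GState where
  node : List ℕ
  stage : ℕ
  cands : Set ℕ

/-- One round of `G₀`: Adam offers candidate `m.1` (with prospective tail `m.2`),
Eve accepts (`b = true`) or rejects. -/
def step (s : GState) (m : AMove) (b : Bool) : GState :=
  if b then ⟨s.node ++ m.1 :: m.2, s.stage + 1, ∅⟩
  else ⟨s.node, s.stage, s.cands ∪ {m.1}⟩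

/-- The state before round `k` of the play `(a, e)`; round `0` is special: Adam announces
the initial node `t₀` (as the tail component of his move, Eve's reply being ignored). -/
def gstate (a : ℕ → AMove) (e : ℕ → Bool) : ℕ → GState
  | 0 => ⟨[], 0, ∅⟩
  | 1 => ⟨(a 0).2, 0, ∅⟩
  | k + 2 => step (gstate a e (k + 1)) (a (k + 1)) (e (k + 1))

/-- Adam wins the play `(a, e)` of `G₀(A)` iff either from some round on Eve never accepts
and the creature Adam builds at that eternal stage `n` has norm `≥ n`, or else all stages are
completed and the resulting real belongs to `A`. -/
def AdamWins (norm : List ℕ → Set ℕ → ℝ) (A : Set (ℕ → ℕ))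
    (a : ℕ → AMove) (e : ℕ → Bool) : Prop :=
  (∃ k₀, 1 ≤ k₀ ∧ (∀ k, k₀ ≤ k → (gstate a e k).stage = (gstate a e k₀).stage) ∧
    ((gstate a e k₀).stage : ℝ) ≤
      norm (gstate a e k₀).node {c | ∃ k, k₀ ≤ k ∧ c ∈ (gstate a e k).cands}) ∨
  ((∀ n : ℕ, ∃ k, n ≤ (gstate a e k).stage) ∧ ∃ x ∈ A, ∀ k, prefixOf (gstate a e k).node x)

/-- Histories of the game: the sequence of (Adam move, Eve reply) pairs so far. -/
abbrev History := List (AMove × Bool)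

/-- The history of the first `k` rounds of the play `(a, e)`. -/
def hist (a : ℕ → AMove) (e : ℕ → Bool) (k : ℕ) : History :=
  (List.range k).map fun i => (a i, e i)

/-- The play `(a, e)` follows Adam's strategy `σ`. -/
def FollowsA (σ : History → AMove) (a : ℕ → AMove) (e : ℕ → Bool) : Prop :=
  ∀ k, a k = σ (hist a e k)

/-- The play `(a, e)` follows Eve's strategy `τ`. -/
def FollowsE (τ : History → AMove → Bool) (a : ℕ → AMove) (e : ℕ → Bool) : Prop :=
  ∀ k, e k = τ (hist a e k) (a k)

namespace EveAux

lemma res_length (x : ℕ → ℕ) (n : ℕ) : (res x n).length = n := by simp [res]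

lemma take_res (y : ℕ → ℕ) {m L : ℕ} (h : m ≤ L) : (res y L).take m = res y m := by
  simp [res, ← List.map_take, List.take_range, inf_eq_left.mpr h]

lemma res_prefix_mono (x : ℕ → ℕ) {m k : ℕ} (h : m ≤ k) : res x m <+: res x k := by
  rw [List.prefix_iff_eq_take, res_length, take_res x h]

lemma prefixOf_of_prefix {s t : List ℕ} {y : ℕ → ℕ} (hs : s <+: t) (ht : prefixOf t y) :
    prefixOf s y := by
  have hlen : s.length ≤ t.length := hs.length_le
  rw [prefixOf] at ht ⊢
  have h2 : s <+: res y t.length := ht ▸ hs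
  rw [List.prefix_iff_eq_take] at h2
  exact h2.trans (take_res y hlen)

lemma res_eq_iff (x y : ℕ → ℕ) (k : ℕ) : res x k = res y k ↔ ∀ m < k, x m = y m := by
  rw [res, res, List.map_inj_left]; simp

def Meets (F : ℕ → Set (ℕ → ℕ)) (j : ℕ) (t : List ℕ) : Prop := ∃ y ∈ F j, prefixOf t y

lemma Meets_mono {F : ℕ → Set (ℕ → ℕ)} {j : ℕ} {s t : List ℕ} (hs : s <+: t) :
    Meets F j t → Meets F j s :=
  fun ⟨y, hy, hp⟩ => ⟨y, hy, prefixOf_of_prefix hs hp⟩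

end EveAux

namespace EveAux

/-- Eve's escape-plans: from node `t` at stage `n`, with target `i`, Eve can either have
escaped already (`escape`), or filter Adam's offers through a small-norm reject set
(`filter`), or accept everything for now (`postpone`). -/
inductive EscT (norm : List ℕ → Set ℕ → ℝ) (F : ℕ → Set (ℕ → ℕ)) (i : ℕ) :
    List ℕ → ℕ → Type where
  | escape {t : List ℕ} {n : ℕ} (h : ∀ i' ≤ i, ¬ Meets F i' t) : EscT norm F i t n
  | filter {t : List ℕ} {n : ℕ} (R : Set ℕ) (hn : norm t R < (n : ℝ))
      (hs : ∀ c ∉ R, ∀ u : List ℕ, EscT norm F i (t ++ c :: u) (n + 1)) : EscT norm F i t n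
  | postpone {t : List ℕ} {n : ℕ}
      (hs : ∀ (c : ℕ) (u : List ℕ), EscT norm F i (t ++ c :: u) (n + 1)) : EscT norm F i t n

/-- Nodes reachable from `(t₀, n₀)` through `P`-steps. -/
inductive Rch (P : List ℕ → ℕ → Prop) (t₀ : List ℕ) (n₀ : ℕ) : List ℕ → ℕ → Prop where
  | base : Rch P t₀ n₀ t₀ n₀
  | step {t n c u} : Rch P t₀ n₀ t n → P (t ++ c :: u) (n + 1) → Rch P t₀ n₀ (t ++ c :: u) (n + 1)

theorem escNonempty (norm : List ℕ → Set ℕ → ℝ) (F : ℕ → Set (ℕ → ℕ))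
    (hmono : ∀ t, ∀ X Y : Set ℕ, X ⊆ Y → norm t X ≤ norm t Y)
    (hcl : ∀ j, IsClosed (F j))
    (hno : ∀ T : Set (List ℕ), Q0 norm T → ¬ branches T ⊆ ⋃ j, F j) :
    ∀ i t n, Nonempty (EscT norm F i t n) := by
  intro i
  by_contra hbad
  push_neg at hbad
  obtain ⟨t₀, n₀, h₀⟩ := hbad
  set Bad : List ℕ → ℕ → Prop := fun t n => ¬ Nonempty (EscT norm F i t n) with hBadDef
  have hstep : ∀ t n, Bad t n → ∃ c u, Bad (t ++ c :: u) (n + 1) := by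
    intro t n hb
    by_contra hcn
    push_neg at hcn
    exact hb ⟨EscT.postpone (fun c u => (not_not.mp (hcn c u)).some)⟩
  have hnormBad : ∀ t n, Bad t n → (n : ℝ) ≤ norm t {c | ∃ u, Bad (t ++ c :: u) (n + 1)} := by
    intro t n hb
    by_contra hlt
    push_neg at hlt
    refine hb ⟨EscT.filter _ hlt (fun c hc u => ?_)⟩
    have h1 : ¬ Bad (t ++ c :: u) (n + 1) := fun hbb => hc ⟨u, hbb⟩
    exact (not_not.mp h1).some
  have hmeet : ∀ t n, Bad t n → ∃ i' ≤ i, Meets F i' t := by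
    intro t n hb
    by_contra hcn
    push_neg at hcn
    exact hb ⟨EscT.escape hcn⟩
  set T : Set (List ℕ) := {s | ∃ t n, Rch Bad t₀ n₀ t n ∧ s <+: t} with hTdef
  have hRchBad : ∀ t n, Rch Bad t₀ n₀ t n → Bad t n := by
    intro t n h
    induction h with
    | base => exact not_nonempty_iff.mpr h₀
    | step _ hP _ => exact hP
  have hgrow : ∀ d t n, Rch Bad t₀ n₀ t n → ∃ t', Rch Bad t₀ n₀ t' (n + d) ∧ t <+: t' := by
    intro d
    induction d with
    | zero => exact fun t n h => ⟨t, h, List.prefix_refl t⟩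
    | succ d ih =>
      intro t n h
      obtain ⟨t', h', hp⟩ := ih t n h
      obtain ⟨c, u, hb⟩ := hstep _ _ (hRchBad _ _ h')
      exact ⟨t' ++ c :: u, Rch.step h' hb, hp.trans (List.prefix_append _ _)⟩
  have hQ0 : Q0 norm T := by
    refine ⟨⟨⟨t₀, t₀, n₀, Rch.base, List.prefix_refl _⟩, ?_⟩, ?_⟩
    · rintro t ⟨t', n', hr, hp⟩ s hs
      exact ⟨t', n', hr, hs.trans hp⟩
    · rintro m s ⟨t, n, hr, hp⟩
      obtain ⟨t', hr', hp'⟩ := hgrow (m + 1) t n hr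
      refine ⟨t', ⟨t', _, hr', List.prefix_refl _⟩, hp.trans hp', ?_⟩
      have hsub : {c | ∃ u, Bad (t' ++ c :: u) (n + (m + 1) + 1)} ⊆ succs T t' := by
        rintro c ⟨u, hb⟩
        exact ⟨t' ++ c :: u, _, Rch.step hr' hb, (List.prefix_append_right_inj t').mpr ⟨u, rfl⟩⟩
      have h1 := hmono t' _ _ hsub
      have h2 := hnormBad t' _ (hRchBad _ _ hr')
      have h3 : (m : ℝ) < ((n + (m + 1) : ℕ) : ℝ) := by push_cast; linarith
      linarith
  have hBr : branches T ⊆ ⋃ j, F j := by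
    intro x hx
    have key : ∀ k, ∃ i' ≤ i, Meets F i' (res x k) := by
      intro k
      obtain ⟨t, n, hr, hp⟩ := hx k
      obtain ⟨i', hi', hm⟩ := hmeet t n (hRchBad _ _ hr)
      exact ⟨i', hi', Meets_mono hp hm⟩
    have pig : ∃ j ≤ i, ∀ k, Meets F j (res x k) := by
      by_contra hcn
      push_neg at hcn
      have hcn' : ∀ j, ∃ k, j ≤ i → ¬ Meets F j (res x k) := by
        intro j
        by_cases h : j ≤ i
        · exact (hcn j h).imp (fun k hk _ => hk)
        · exact ⟨0, fun h' => absurd h' h⟩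
      choose f hf using hcn'
      set K := (Finset.range (i + 1)).sup f with hK
      obtain ⟨i', hi', hm⟩ := key K
      have hfK : f i' ≤ K := Finset.le_sup (Finset.mem_range.mpr (Nat.lt_succ_of_le hi'))
      exact hf i' hi' (Meets_mono (res_prefix_mono x hfK) hm)
    obtain ⟨j, hj, hM⟩ := pig
    have hych : ∀ k, ∃ y, y ∈ F j ∧ ∀ m < k, y m = x m := by
      intro k
      obtain ⟨y, hy, hp⟩ := hM k
      refine ⟨y, hy, fun m hm => ?_⟩
      have h1 : res x k = res y k := by rwa [prefixOf, res_length] at hp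
      exact ((res_eq_iff x y k).mp h1 m hm).symm
    have htd : Filter.Tendsto (fun k => Classical.choose (hych k)) Filter.atTop (nhds x) := by
      rw [tendsto_pi_nhds]
      intro m
      apply Filter.Tendsto.congr' _ tendsto_const_nhds
      filter_upwards [Filter.eventually_ge_atTop (m + 1)] with k hk
      exact ((Classical.choose_spec (hych k)).2 m (lt_of_lt_of_le (Nat.lt_succ_self m) hk)).symm
    have hxF : x ∈ F j :=
      (hcl j).mem_of_tendsto htd
        (Filter.Eventually.of_forall fun k => (Classical.choose_spec (hych k)).1)
    exact Set.mem_iUnion.mpr ⟨j, hxF⟩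
  exact hno T hQ0 hBr

end EveAux

namespace EveAux

variable {norm : List ℕ → Set ℕ → ℝ} {F : ℕ → Set (ℕ → ℕ)}

/-- A plan: a target `i`, current node `t`, current stage `n`, and an escape-plan. -/
def Plan (norm : List ℕ → Set ℕ → ℝ) (F : ℕ → Set (ℕ → ℕ)) : Type :=
  Σ i : ℕ, Σ t : List ℕ, Σ n : ℕ, EscT norm F i t n

def EscFun (norm : List ℕ → Set ℕ → ℝ) (F : ℕ → Set (ℕ → ℕ)) : Type :=
  ∀ (i : ℕ) (t : List ℕ) (n : ℕ), EscT norm F i t n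

/-- Eve's internal state: round counter and current plan. -/
structure PSt (norm : List ℕ → Set ℕ → ℝ) (F : ℕ → Set (ℕ → ℕ)) where
  k : ℕ
  p : Plan norm F

open Classical in
/-- Update of the plan when Eve accepts the move `(c, u)`. -/
noncomputable def nextPlan (esc : EscFun norm F) (σ : Plan norm F) (c : ℕ) (u : List ℕ) :
    Plan norm F :=
  match σ with
  | ⟨i, t, n, EscT.escape _⟩ => ⟨i + 1, t ++ c :: u, n + 1, esc (i + 1) (t ++ c :: u) (n + 1)⟩
  | ⟨i, t, n, EscT.filter R _ hs⟩ =>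
      if hc : c ∈ R then ⟨i, t ++ c :: u, n + 1, esc i (t ++ c :: u) (n + 1)⟩
      else ⟨i, t ++ c :: u, n + 1, hs c hc u⟩
  | ⟨i, t, n, EscT.postpone hs⟩ => ⟨i, t ++ c :: u, n + 1, hs c u⟩

open Classical in
/-- Eve's decision: accept unless the current plan filters out the offered value. -/
noncomputable def eveDec (s : PSt norm F) (c : ℕ) : Bool :=
  if s.k = 0 then true
  else match s.p with
    | ⟨_, _, _, EscT.filter R _ _⟩ => if c ∈ R then false else true
    | _ => true

noncomputable def upd (esc : EscFun norm F) (s : PSt norm F) (m : AMove) (b : Bool) :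
    PSt norm F :=
  if s.k = 0 then ⟨1, ⟨0, m.2, 0, esc 0 m.2 0⟩⟩
  else if b then ⟨s.k + 1, nextPlan esc s.p m.1 m.2⟩ else ⟨s.k + 1, s.p⟩

noncomputable def PSh (esc : EscFun norm F) (h : History) : PSt norm F :=
  h.foldl (fun s q => upd esc s q.1 q.2) ⟨0, ⟨0, [], 0, esc 0 [] 0⟩⟩

def IsEsc : Plan norm F → Prop
  | ⟨_, _, _, EscT.escape _⟩ => True
  | _ => False

lemma nextPlan_node (esc : EscFun norm F) (σ : Plan norm F) (c : ℕ) (u : List ℕ) :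
    (nextPlan esc σ c u).2.1 = σ.2.1 ++ c :: u := by
  rcases σ with ⟨i, t, n, pf⟩
  cases pf with
  | escape h => rfl
  | postpone hs => rfl
  | filter R hn hs =>
    by_cases hc : c ∈ R
    · rw [show nextPlan esc ⟨i, t, n, EscT.filter R hn hs⟩ c u
          = ⟨i, t ++ c :: u, n + 1, esc i (t ++ c :: u) (n + 1)⟩ from dif_pos hc]
    · rw [show nextPlan esc ⟨i, t, n, EscT.filter R hn hs⟩ c u
          = ⟨i, t ++ c :: u, n + 1, hs c hc u⟩ from dif_neg hc]

lemma nextPlan_stage (esc : EscFun norm F) (σ : Plan norm F) (c : ℕ) (u : List ℕ) :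
    (nextPlan esc σ c u).2.2.1 = σ.2.2.1 + 1 := by
  rcases σ with ⟨i, t, n, pf⟩
  cases pf with
  | escape h => rfl
  | postpone hs => rfl
  | filter R hn hs =>
    by_cases hc : c ∈ R
    · rw [show nextPlan esc ⟨i, t, n, EscT.filter R hn hs⟩ c u
          = ⟨i, t ++ c :: u, n + 1, esc i (t ++ c :: u) (n + 1)⟩ from dif_pos hc]
    · rw [show nextPlan esc ⟨i, t, n, EscT.filter R hn hs⟩ c u
          = ⟨i, t ++ c :: u, n + 1, hs c hc u⟩ from dif_neg hc]

lemma nextPlan_tgt (esc : EscFun norm F) (σ : Plan norm F) (c : ℕ) (u : List ℕ) :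
    σ.1 ≤ (nextPlan esc σ c u).1 := by
  rcases σ with ⟨i, t, n, pf⟩
  cases pf with
  | escape h => exact Nat.le_succ i
  | postpone hs => exact le_refl i
  | filter R hn hs =>
    by_cases hc : c ∈ R
    · rw [show nextPlan esc ⟨i, t, n, EscT.filter R hn hs⟩ c u
          = ⟨i, t ++ c :: u, n + 1, esc i (t ++ c :: u) (n + 1)⟩ from dif_pos hc]
    · rw [show nextPlan esc ⟨i, t, n, EscT.filter R hn hs⟩ c u
          = ⟨i, t ++ c :: u, n + 1, hs c hc u⟩ from dif_neg hc]

lemma upd_true (esc : EscFun norm F) (s : PSt norm F) (m : AMove) (h : ¬ s.k = 0) :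
    upd esc s m true = ⟨s.k + 1, nextPlan esc s.p m.1 m.2⟩ := by
  rw [upd, if_neg h]
  rfl

lemma upd_false (esc : EscFun norm F) (s : PSt norm F) (m : AMove) (h : ¬ s.k = 0) :
    upd esc s m false = ⟨s.k + 1, s.p⟩ := by
  rw [upd, if_neg h]
  rfl

end EveAux

open EveAux in
theorem Fsigma_small_implies_eve_wins_G0 (norm : List ℕ → Set ℕ → ℝ)
    (hnn : ∀ t X, 0 ≤ norm t X)
    (hmono : ∀ t, ∀ X Y : Set ℕ, X ⊆ Y → norm t X ≤ norm t Y)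
    (hBorel : ∀ t : List ℕ, Measurable fun X : ℕ → Bool => norm t {n | X n = true})
    (A B : Set (ℕ → ℕ)) (hAB : A ⊆ B)
    (hFsigma : ∃ F : ℕ → Set (ℕ → ℕ), (∀ n, IsClosed (F n)) ∧ B = ⋃ n, F n)
    (hno : ∀ T : Set (List ℕ), Q0 norm T → ¬ branches T ⊆ B) :
    ∃ τ : History → AMove → Bool, ∀ a e, FollowsE τ a e → ¬ AdamWins norm A a e := by
  classical
  obtain ⟨F, hcl, hBeq⟩ := hFsigma
  have hno' : ∀ T : Set (List ℕ), Q0 norm T → ¬ branches T ⊆ ⋃ j, F j := by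
    intro T hT hsub
    exact hno T hT (by rw [hBeq]; exact hsub)
  have hne := escNonempty norm F hmono hcl hno'
  let esc : EscFun norm F := fun i t n => (hne i t n).some
  refine ⟨fun h m => eveDec (PSh esc h) m.1, ?_⟩
  intro a e hFoll hWin
  set S : ℕ → PSt norm F := fun k => PSh esc (hist a e k) with hSdef
  have he : ∀ k, e k = eveDec (S k) (a k).1 := hFoll
  have hSsucc : ∀ k, S (k + 1) = upd esc (S k) (a k) (e k) := by
    intro k
    show PSh esc (hist a e (k + 1)) = _
    rw [hist, List.range_succ, List.map_append, PSh, List.foldl_append]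
    rfl
  have hSk : ∀ k, (S k).k = k := by
    intro k
    induction k with
    | zero => rfl
    | succ k ih =>
      cases k with
      | zero =>
        rw [hSsucc 0, upd, if_pos (show (S 0).k = 0 from rfl)]
      | succ j =>
        cases he' : e (j + 1) with
        | false =>
          rw [hSsucc (j + 1), he', upd_false esc _ _ (by rw [ih]; omega)]
          show (S (j + 1)).k + 1 = j + 1 + 1
          rw [ih]
        | true =>
          rw [hSsucc (j + 1), he', upd_true esc _ _ (by rw [ih]; omega)]
          show (S (j + 1)).k + 1 = j + 1 + 1
          rw [ih]
  have hg : ∀ k, 1 ≤ k → gstate a e (k + 1) = step (gstate a e k) (a k) (e k) := by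
    intro k hk
    match k, hk with
    | (j + 1), _ => rfl
  have hstg1 : ∀ k, (gstate a e k).stage ≤ (gstate a e (k + 1)).stage := by
    intro k
    match k with
    | 0 => exact le_refl 0
    | (j + 1) =>
      rw [hg (j + 1) (by omega), step]
      cases e (j + 1)
      · exact le_refl _
      · exact Nat.le_succ _
  have hstgmono : ∀ {j k : ℕ}, j ≤ k → (gstate a e j).stage ≤ (gstate a e k).stage :=
    fun h => monotone_nat_of_le_succ hstg1 h
  have haccst : ∀ k, 1 ≤ k → e k = true →
      (gstate a e (k + 1)).stage = (gstate a e k).stage + 1 := by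
    intro k hk ht
    rw [hg k hk, step, ht]
    rfl
  have hrejg : ∀ k, 1 ≤ k → e k = false → (gstate a e (k + 1)).node = (gstate a e k).node ∧
      (gstate a e (k + 1)).stage = (gstate a e k).stage := by
    intro k hk hf
    rw [hg k hk, step, hf]
    exact ⟨rfl, rfl⟩
  have hSrej : ∀ k, 1 ≤ k → e k = false → (S (k + 1)).p = (S k).p := by
    intro k hk hf
    rw [hSsucc k, hf, upd_false esc _ _ (by rw [hSk k]; omega)]
  have hSconstOn : ∀ j k, 1 ≤ j → j ≤ k → (∀ m, j ≤ m → m < k → e m = false) →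
      (S k).p = (S j).p := by
    intro j k hj hjk hf
    induction k, hjk using Nat.le_induction with
    | base => rfl
    | succ k hk ih =>
      rw [hSrej k (hj.trans hk) (hf k hk (Nat.lt_succ_self k))]
      exact ih (fun m hm hmk => hf m hm (hmk.trans (Nat.lt_succ_self k)))
  have hmatch : ∀ k, 1 ≤ k → (S k).p.2.1 = (gstate a e k).node ∧
      (S k).p.2.2.1 = (gstate a e k).stage := by
    intro k
    induction k with
    | zero => omega
    | succ k ih =>
      intro _
      cases k with
      | zero =>
        rw [hSsucc 0, upd, if_pos (show (S 0).k = 0 from rfl)]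
        exact ⟨rfl, rfl⟩
      | succ j =>
        have ih' := ih (by omega)
        cases he' : e (j + 1) with
        | false =>
          have hr := hrejg (j + 1) (by omega) he'
          rw [hSsucc (j + 1), he', upd_false esc _ _ (by rw [hSk]; omega)]
          exact ⟨ih'.1.trans hr.1.symm, ih'.2.trans hr.2.symm⟩
        | true =>
          have ha := haccst (j + 1) (by omega) he'
          have hb : (gstate a e (j + 2)).node = (gstate a e (j + 1)).node ++
              (a (j + 1)).1 :: (a (j + 1)).2 := by
            rw [hg (j + 1) (by omega), step, he']
            rfl
          rw [hSsucc (j + 1), he', upd_true esc _ _ (by rw [hSk]; omega)]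
          constructor
          · show (nextPlan esc (S (j + 1)).p (a (j + 1)).1 (a (j + 1)).2).2.1 = _
            rw [nextPlan_node, ih'.1, hb]
          · show (nextPlan esc (S (j + 1)).p (a (j + 1)).1 (a (j + 1)).2).2.2.1 = _
            rw [nextPlan_stage, ih'.2, ha]
  rcases hWin with ⟨k₀, hk₀, hconst, hbig⟩ | ⟨hub, x, hxA, hpre⟩
  · -- Disjunct 1 : Eve stalls safely
    have hrej : ∀ k, k₀ ≤ k → e k = false := by
      intro k hk
      cases ht : e k with
      | false => rfl
      | true =>
        have h1 := haccst k (hk₀.trans hk) ht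
        have h2 := hconst k hk
        have h3 := hconst (k + 1) (hk.trans (Nat.le_succ k))
        omega
    have hSc : ∀ k, k₀ ≤ k → (S k).p = (S k₀).p :=
      fun k hk => hSconstOn k₀ k hk₀ hk (fun m hm _ => hrej m hm)
    rcases hp : (S k₀).p with ⟨i, t, n, pf⟩
    have hnode : t = (gstate a e k₀).node := by
      have h1 := (hmatch k₀ hk₀).1; rw [hp] at h1; exact h1
    have hstage : n = (gstate a e k₀).stage := by
      have h1 := (hmatch k₀ hk₀).2; rw [hp] at h1; exact h1
    cases pf with
    | escape h =>
      have hdec : eveDec (S k₀) (a k₀).1 = true := by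
        simp [eveDec, hSk k₀, show ¬ k₀ = 0 by omega, hp]
      have h1 := hrej k₀ (le_refl _)
      rw [he k₀, hdec] at h1
      exact Bool.noConfusion h1
    | postpone hs =>
      have hdec : eveDec (S k₀) (a k₀).1 = true := by
        simp [eveDec, hSk k₀, show ¬ k₀ = 0 by omega, hp]
      have h1 := hrej k₀ (le_refl _)
      rw [he k₀, hdec] at h1
      exact Bool.noConfusion h1
    | filter R hn hs =>
      have hmemAt : ∀ j, 1 ≤ j → (S j).p = ⟨i, t, n, EscT.filter R hn hs⟩ →
          e j = false → (a j).1 ∈ R := by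
        intro j hj hpj hfj
        by_contra hnm
        have hdec : eveDec (S j) (a j).1 = true := by
          simp [eveDec, hSk j, show ¬ j = 0 by omega, hpj, hnm]
        rw [he j, hdec] at hfj
        exact Bool.noConfusion hfj
      have hcands : ∀ k, ∀ c ∈ (gstate a e (k + 1)).cands, ∃ j, 1 ≤ j ∧ j < k + 1 ∧
          e j = false ∧ c = (a j).1 ∧ (gstate a e j).stage = (gstate a e (k + 1)).stage := by
        intro k
        induction k with
        | zero => exact fun c hc => absurd hc (Set.notMem_empty c)
        | succ k ih =>
          intro c hc
          rw [hg (k + 1) (by omega), step] at hc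
          cases hek : e (k + 1) with
          | true =>
            rw [hek] at hc
            exact absurd hc (Set.notMem_empty c)
          | false =>
            rw [hek] at hc
            have hstg : (gstate a e (k + 2)).stage = (gstate a e (k + 1)).stage :=
              (hrejg (k + 1) (by omega) hek).2
            rcases hc with hc | hc
            · obtain ⟨j, h1, h2, h3, h4, h5⟩ := ih c hc
              exact ⟨j, h1, by omega, h3, h4, by rw [hstg]; exact h5⟩
            · exact ⟨k + 1, by omega, by omega, hek, hc, by rw [hstg]⟩
      have hsubR : {c | ∃ k, k₀ ≤ k ∧ c ∈ (gstate a e k).cands} ⊆ R := by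
        rintro c ⟨k, hk, hc⟩
        match k, hk, hc with
        | (k' + 1), hk, hc =>
          obtain ⟨j, hj1, hjk, hjf, hceq, hjst⟩ := hcands k' c hc
          rcases le_or_gt k₀ j with h | h
          · rw [hceq]
            exact hmemAt j (hk₀.trans h) ((hSc j h).trans hp) (hrej j h)
          · have h1 : (gstate a e j).stage = (gstate a e k₀).stage := by
              rw [hjst]; exact hconst _ hk
            have hnoacc : ∀ m, j ≤ m → m < k₀ → e m = false := by
              intro m hm hmk
              cases htm : e m with
              | false => rfl
              | true =>
                have h2 := haccst m (hj1.trans hm) htm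
                have l1 : (gstate a e j).stage ≤ (gstate a e m).stage := hstgmono hm
                have l2 : (gstate a e (m + 1)).stage ≤ (gstate a e k₀).stage := hstgmono hmk
                omega
            have hpj : (S j).p = ⟨i, t, n, EscT.filter R hn hs⟩ :=
              (hSconstOn j k₀ hj1 h.le hnoacc).symm.trans hp
            rw [hceq]
            exact hmemAt j hj1 hpj hjf
      have hC : norm (gstate a e k₀).node {c | ∃ k, k₀ ≤ k ∧ c ∈ (gstate a e k).cands} ≤
          norm t R := by
        rw [← hnode]
        exact hmono t _ R hsubR
      have hfin : ((gstate a e k₀).stage : ℝ) ≤ norm t R := le_trans hbig hC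
      rw [← hstage] at hfin
      linarith
  · -- Disjunct 2 : the real escapes B
    have hInfAcc : ∀ m, ∃ k, m ≤ k ∧ 1 ≤ k ∧ e k = true := by
      intro m
      by_contra hcn
      push_neg at hcn
      have hf : ∀ k, max m 1 ≤ k → e k = false := by
        intro k hk
        have h1 := hcn k (le_trans (le_max_left _ _) hk) (le_trans (le_max_right _ _) hk)
        cases htk : e k with
        | false => rfl
        | true => exact absurd htk h1
      have hconst2 : ∀ k, max m 1 ≤ k → (gstate a e k).stage = (gstate a e (max m 1)).stage := by
        intro k hk
        induction k, hk using Nat.le_induction with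
        | base => rfl
        | succ k hk ih =>
          rw [(hrejg k (le_trans (le_max_right m 1) hk) (hf k hk)).2]
          exact ih
      obtain ⟨k, hk⟩ := hub ((gstate a e (max m 1)).stage + 1)
      rcases le_or_gt (max m 1) k with h | h
      · rw [hconst2 k h] at hk; omega
      · have h2 := hstgmono h.le; omega
    have firstAcc : ∀ k, 1 ≤ k → ∃ k', k ≤ k' ∧ e k' = true ∧ (S k').p = (S k).p := by
      intro k hk
      obtain ⟨k₂, hk₂, _, hacc2⟩ := hInfAcc k
      have hex : ∃ j, k ≤ j ∧ e j = true := ⟨k₂, hk₂, hacc2⟩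
      refine ⟨Nat.find hex, (Nat.find_spec hex).1, (Nat.find_spec hex).2, ?_⟩
      refine hSconstOn k (Nat.find hex) hk (Nat.find_spec hex).1 ?_
      intro m hm hmk
      cases htm : e m with
      | false => rfl
      | true => exact absurd (⟨hm, htm⟩ : k ≤ m ∧ e m = true) (Nat.find_min hex hmk)
    have main : ∀ (i : ℕ) (t : List ℕ) (n : ℕ) (pf : EscT norm F i t n), ∀ k, 1 ≤ k →
        (S k).p = ⟨i, t, n, pf⟩ →
        (∀ k', k ≤ k' → e k' = true → ¬ IsEsc (S k').p) → False := by
      intro i t n pf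
      induction pf with
      | @escape t n h =>
        intro k hk hp hNo
        obtain ⟨k', hkk', hacc, hSp⟩ := firstAcc k hk
        exact hNo k' hkk' hacc (by rw [hSp, hp]; trivial)
      | @filter t n R hn hs ih =>
        intro k hk hp hNo
        obtain ⟨k', hkk', hacc, hSp⟩ := firstAcc k hk
        have hpk' : (S k').p = ⟨i, t, n, EscT.filter R hn hs⟩ := hSp.trans hp
        have hk'1 : 1 ≤ k' := hk.trans hkk'
        have hcR : (a k').1 ∉ R := by
          intro hmem
          have hdec : eveDec (S k') (a k').1 = false := by
            simp [eveDec, hSk k', show ¬ k' = 0 by omega, hpk', hmem]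
          rw [he k', hdec] at hacc
          exact Bool.noConfusion hacc
        have hnext : (S (k' + 1)).p =
            ⟨i, t ++ (a k').1 :: (a k').2, n + 1, hs (a k').1 hcR (a k').2⟩ := by
          rw [hSsucc k', hacc, upd_true esc _ _ (by rw [hSk k']; omega)]
          show nextPlan esc (S k').p (a k').1 (a k').2 = _
          rw [hpk']
          exact dif_neg hcR
        exact ih (a k').1 hcR (a k').2 (k' + 1) (by omega) hnext
          (fun m hm ha => hNo m (by omega) ha)
      | @postpone t n hs ih =>
        intro k hk hp hNo
        have hacc : e k = true := by
          rw [he k]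
          simp [eveDec, hSk k, show ¬ k = 0 by omega, hp]
        have hnext : (S (k + 1)).p =
            ⟨i, t ++ (a k).1 :: (a k).2, n + 1, hs (a k).1 (a k).2⟩ := by
          rw [hSsucc k, hacc, upd_true esc _ _ (by rw [hSk k]; omega)]
          show nextPlan esc (S k).p (a k).1 (a k).2 = _
          rw [hp]
          rfl
        exact ih (a k).1 (a k).2 (k + 1) (by omega) hnext
          (fun m hm ha => hNo m (by omega) ha)
    have hEscEv : ∀ m, ∃ k, m ≤ k ∧ 1 ≤ k ∧ e k = true ∧ IsEsc (S k).p := by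
      intro m
      by_contra hcn
      push_neg at hcn
      obtain ⟨k₁, hk₁, h1, hacc⟩ := hInfAcc m
      exact main (S k₁).p.1 (S k₁).p.2.1 (S k₁).p.2.2.1 (S k₁).p.2.2.2 k₁ h1 rfl
        (fun k' hk' hacc' => hcn k' (hk₁.trans hk') (by omega) hacc')
    have htg1 : ∀ k, 1 ≤ k → (S k).p.1 ≤ (S (k + 1)).p.1 := by
      intro k hk
      cases he' : e k with
      | false =>
        rw [hSsucc k, he', upd_false esc _ _ (by rw [hSk k]; omega)]
      | true =>
        rw [hSsucc k, he', upd_true esc _ _ (by rw [hSk k]; omega)]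
        exact nextPlan_tgt esc (S k).p (a k).1 (a k).2
    have htgmono : ∀ j k, 1 ≤ j → j ≤ k → (S j).p.1 ≤ (S k).p.1 := by
      intro j k hj hjk
      induction k, hjk using Nat.le_induction with
      | base => exact le_refl _
      | succ k hk ih => exact ih.trans (htg1 k (hj.trans hk))
    have hesc1 : ∀ k, 1 ≤ k → e k = true → IsEsc (S k).p →
        (S (k + 1)).p.1 = (S k).p.1 + 1 := by
      intro k hk hacc hesc
      rcases hp : (S k).p with ⟨i, t, n, pf⟩
      cases pf with
      | escape h =>
        rw [hSsucc k, hacc, upd_true esc _ _ (by rw [hSk k]; omega)]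
        show (nextPlan esc (S k).p (a k).1 (a k).2).1 = i + 1
        rw [hp]
        rfl
      | filter R hn hs => rw [hp] at hesc; simp [IsEsc] at hesc
      | postpone hs => rw [hp] at hesc; simp [IsEsc] at hesc
    have havoid : ∀ k, 1 ≤ k → IsEsc (S k).p → ∀ i' ≤ (S k).p.1, x ∉ F i' := by
      intro k hk hesc i' hi' hxF
      rcases hp : (S k).p with ⟨i, t, n, pf⟩
      cases pf with
      | escape h =>
        rw [hp] at hi'
        have ht : t = (gstate a e k).node := by
          have h1 := (hmatch k hk).1; rw [hp] at h1; exact h1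
        exact h i' hi' ⟨x, hxF, by rw [ht]; exact hpre k⟩
      | filter R hn hs => rw [hp] at hesc; simp [IsEsc] at hesc
      | postpone hs => rw [hp] at hesc; simp [IsEsc] at hesc
    have hTgt : ∀ j, ∃ k, 1 ≤ k ∧ e k = true ∧ IsEsc (S k).p ∧ j ≤ (S k).p.1 := by
      intro j
      induction j with
      | zero =>
        obtain ⟨k, _, h1, hacc, hesc⟩ := hEscEv 0
        exact ⟨k, h1, hacc, hesc, Nat.zero_le _⟩
      | succ j ih =>
        obtain ⟨k, h1, hacc, hesc, hj⟩ := ih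
        obtain ⟨k₂, hk₂, h12, hacc2, hesc2⟩ := hEscEv (k + 1)
        refine ⟨k₂, h12, hacc2, hesc2, ?_⟩
        have e1 : (S (k + 1)).p.1 = (S k).p.1 + 1 := hesc1 k h1 hacc hesc
        have e2 : (S (k + 1)).p.1 ≤ (S k₂).p.1 := htgmono (k + 1) k₂ (by omega) hk₂
        omega
    have hxB : x ∈ ⋃ j, F j := by
      have h1 := hAB hxA
      rw [hBeq] at h1
      exact h1
    obtain ⟨j, hj⟩ := Set.mem_iUnion.mp hxB
    obtain ⟨k, h1, hacc, hesc, hjle⟩ := hTgt j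
    exact havoid k h1 hesc j hjle hj
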